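/- arXiv:0809.4325 — 2 statements merged into one kernel-verified Lean document; each statement's English description precedes it below -/
import Mathlib

section
/- For every j ∈ {1,…,c} and every T > 0, the simulation time s_j satisfies T ≤ s_j < T + c·τ_j, where τ_j = 1/w_j. -/
/-- `c ≥ 1` channels with positive data rates `w i`, `W = ∑ w l`, `τ i = 1 / w i`,
sub-intervals `Tsub j = w j * T / W`, STS counts `L i j = ⌈Tsub j / τ i⌉`,
and simulation times `s j = ∑ i, (w i / w j) * L i j * τ i`.
Then for every channel `j` and every `T > 0` we have `T ≤ s j < T + c * τ j`. -/
theorem simulation_time_bounds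
    (c : ℕ) (hc : 1 ≤ c) (w : Fin c → ℝ) (hw : ∀ i, 0 < w i)
    (T : ℝ) (hT : 0 < T)
    (W : ℝ) (hW : W = ∑ l : Fin c, w l)
    (τ : Fin c → ℝ) (hτ : ∀ i, τ i = 1 / w i)
    (Tsub : Fin c → ℝ) (hTsub : ∀ j, Tsub j = w j * T / W)
    (L : Fin c → Fin c → ℤ) (hL : ∀ i j, L i j = ⌈Tsub j / τ i⌉)
    (s : Fin c → ℝ) (hs : ∀ j, s j = ∑ i : Fin c, (w i / w j) * (L i j : ℝ) * τ i)
    (j : Fin c) :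
    T ≤ s j ∧ s j < T + (c : ℝ) * τ j := by
  have hne : (Finset.univ : Finset (Fin c)).Nonempty := by
    have : Nonempty (Fin c) := Fin.pos_iff_nonempty.mp (by omega)
    exact Finset.univ_nonempty
  have hWpos : 0 < W := by
    rw [hW]; exact Finset.sum_pos (fun i _ => hw i) hne
  have hwj := hw j
  set x : Fin c → ℝ := fun i => w i * w j * T / W with hxdef
  have hx : ∀ i, Tsub j / τ i = x i := by
    intro i
    rw [hTsub, hτ]
    field_simp [hxdef, (hw i).ne']
    simp only [hxdef]; field_simp [hWpos.ne']
  have hs' : s j = (∑ i : Fin c, ((⌈x i⌉ : ℤ) : ℝ)) / w j := by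
    rw [hs, Finset.sum_div]
    refine Finset.sum_congr rfl fun i _ => ?_
    rw [hL, hx, hτ]
    field_simp [(hw i).ne']
  have hsumx : (∑ i : Fin c, x i) = w j * T := by
    have : (∑ i : Fin c, x i) = (∑ i : Fin c, w i) * (w j * T) / W := by
      rw [Finset.sum_mul, Finset.sum_div]
      refine Finset.sum_congr rfl fun i _ => ?_
      rw [hxdef]; ring
    rw [this, ← hW]
    field_simp
  constructor
  · rw [hs', le_div_iff₀ hwj]
    calc T * w j = ∑ i : Fin c, x i := by rw [hsumx]; ring
    _ ≤ ∑ i : Fin c, ((⌈x i⌉ : ℤ) : ℝ) :=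
      Finset.sum_le_sum fun i _ => Int.le_ceil _
  · rw [hs', div_lt_iff₀ hwj]
    have h1 : (∑ i : Fin c, ((⌈x i⌉ : ℤ) : ℝ)) < ∑ i : Fin c, (x i + 1) :=
      Finset.sum_lt_sum_of_nonempty hne fun i _ => Int.ceil_lt_add_one _
    calc (∑ i : Fin c, ((⌈x i⌉ : ℤ) : ℝ)) < ∑ i : Fin c, (x i + 1) := h1
    _ = w j * T + c := by rw [Finset.sum_add_distrib, hsumx]; simp
    _ = (T + (c : ℝ) * τ j) * w j := by rw [hτ]; field_simp
end

section
/- For every T > 0, the quantity ŝ(T) := max_{1 ≤ j ≤ c} s_j satisfies T ≤ ŝ(T) < T + c·max_{1 ≤ j ≤ c} τ_j. -/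
/-- With `c ≥ 1` channels of positive data rates `w i`, `W = ∑ w l`, `τ i = 1 / w i`,
`Tsub j = w j * T / W`, `L i j = ⌈Tsub j / τ i⌉`,
`s j = ∑ i, (w i / w j) * L i j * τ i`, and `ŝ = max_{1 ≤ j ≤ c} s j`,
for every `T > 0` we have `T ≤ ŝ < T + c * max_{1 ≤ j ≤ c} τ j`. -/
theorem max_simulation_time_bounds
    (c : ℕ) (hc : 1 ≤ c) (w : Fin c → ℝ) (hw : ∀ i, 0 < w i)
    (T : ℝ) (hT : 0 < T)
    (W : ℝ) (hW : W = ∑ l : Fin c, w l)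
    (τ : Fin c → ℝ) (hτ : ∀ i, τ i = 1 / w i)
    (Tsub : Fin c → ℝ) (hTsub : ∀ j, Tsub j = w j * T / W)
    (L : Fin c → Fin c → ℤ) (hL : ∀ i j, L i j = ⌈Tsub j / τ i⌉)
    (s : Fin c → ℝ) (hs : ∀ j, s j = ∑ i : Fin c, (w i / w j) * (L i j : ℝ) * τ i)
    (shat : ℝ)
    (hshat : shat = Finset.univ.sup' (Finset.univ_nonempty_iff.mpr ⟨⟨0, hc⟩⟩) s) :
    T ≤ shat ∧
      shat < T + (c : ℝ) * Finset.univ.sup' (Finset.univ_nonempty_iff.mpr ⟨⟨0, hc⟩⟩) τ := by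
  have j0 : Fin c := ⟨0, hc⟩
  have hWpos : 0 < W := by
    rw [hW]; exact Finset.sum_pos (fun i _ => hw i) ⟨j0, Finset.mem_univ _⟩
  -- term rewriting
  have hterm : ∀ i j : Fin c, (w i / w j) * (L i j : ℝ) * τ i = (L i j : ℝ) / w j := by
    intro i j
    have h1 : w i ≠ 0 := (hw i).ne'
    have h2 : w j ≠ 0 := (hw j).ne'
    rw [hτ]
    field_simp
  have hratio : ∀ i j : Fin c, Tsub j / τ i = w i * w j * T / W := by
    intro i j
    have h1 : w i ≠ 0 := (hw i).ne'
    have h2 : W ≠ 0 := hWpos.ne'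
    rw [hτ, hTsub]
    field_simp
  -- lower bound on each s j
  have hlow : ∀ j : Fin c, T ≤ s j := by
    intro j
    rw [hs]
    have : T = ∑ i : Fin c, w i * T / W := by
      rw [← Finset.sum_div, ← Finset.sum_mul, ← hW]
      field_simp
    rw [this]
    refine Finset.sum_le_sum fun i _ => ?_
    rw [hterm]
    have h1 : Tsub j / τ i ≤ (L i j : ℝ) := by rw [hL]; exact Int.le_ceil _
    rw [hratio] at h1
    have h2 : w i * T / W = (w i * w j * T / W) / w j := by
      have h3 : w j ≠ 0 := (hw j).ne'
      have h4 : W ≠ 0 := hWpos.ne'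
      field_simp
    rw [h2]
    exact div_le_div_of_nonneg_right h1 (hw j).le
  -- upper bound on each s j
  have hup : ∀ j : Fin c, s j < T + (c : ℝ) * τ j := by
    intro j
    rw [hs]
    have hT' : T + (c : ℝ) * τ j = ∑ i : Fin c, (w i * T / W + τ j) := by
      rw [Finset.sum_add_distrib, ← Finset.sum_div, ← Finset.sum_mul, ← hW,
        Finset.sum_const, Finset.card_univ, Fintype.card_fin, nsmul_eq_mul]
      field_simp
    rw [hT']
    refine Finset.sum_lt_sum_of_nonempty ⟨j0, Finset.mem_univ _⟩ fun i _ => ?_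
    rw [hterm]
    have h1 : (L i j : ℝ) < Tsub j / τ i + 1 := by rw [hL]; exact Int.ceil_lt_add_one _
    rw [hratio] at h1
    have h2 : (L i j : ℝ) / w j < (w i * w j * T / W + 1) / w j :=
      (div_lt_div_iff_of_pos_right (hw j)).mpr h1
    have h3 : (w i * w j * T / W + 1) / w j = w i * T / W + τ j := by
      have h4 : w j ≠ 0 := (hw j).ne'
      have h5 : W ≠ 0 := hWpos.ne'
      rw [hτ]
      field_simp
    rwa [h3] at h2
  constructor
  · rw [hshat]
    exact le_trans (hlow j0) (Finset.le_sup' s (Finset.mem_univ j0))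
  · rw [hshat]
    rw [Finset.sup'_lt_iff]
    intro j _
    refine lt_of_lt_of_le (hup j) ?_
    have : τ j ≤ Finset.univ.sup' (Finset.univ_nonempty_iff.mpr ⟨⟨0, hc⟩⟩) τ :=
      Finset.le_sup' τ (Finset.mem_univ j)
    have hc0 : (0:ℝ) ≤ (c : ℝ) := Nat.cast_nonneg c
    nlinarith
end
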